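/- arXiv:1403.7013 — 4 statements merged into one kernel-verified Lean document; each statement's English description precedes it below -/
import Mathlib

section
/- Let A be an n×n complex matrix with Hermitian part H = (A + A^H)/2 positive definite and skew-Hermitian part S = (A - A^H)/2, and let α > 0. Then the spectral radius of the HSS iteration matrix M(α) = (αI + S)^{-1}(αI - H)(αI + H)^{-1}(αI - S) is strictly less than 1. -/
open Matrix ComplexOrder

open scoped ENNReal NNReal

open scoped Matrix.Norms.L2Operator

section Aux

variable {n : ℕ}

lemma hss_posDef_smul_real {D : Matrix (Fin n) (Fin n) ℂ} {c : ℝ} (hc : 0 < c)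
    (hD : D.PosDef) : ((c : ℂ) • D).PosDef := by
  refine Matrix.PosDef.of_dotProduct_mulVec_pos ?_ fun x hx => ?_
  · have : ((c : ℂ) • D)ᴴ = (c : ℂ) • Dᴴ := by
      simp [conjTranspose_smul, Complex.conj_ofReal]
    rw [Matrix.IsHermitian, this, hD.1.eq]
  · rw [smul_mulVec, dotProduct_smul, smul_eq_mul]
    exact mul_pos (by exact_mod_cast hc) (hD.dotProduct_mulVec_pos hx)

lemma hss_posDef_conj {D C : Matrix (Fin n) (Fin n) ℂ} (hD : D.PosDef)
    (hC : IsUnit C.det) : (Cᴴ * D * C).PosDef := by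
  refine Matrix.PosDef.of_dotProduct_mulVec_pos ?_ fun x hx => ?_
  · rw [Matrix.IsHermitian, conjTranspose_mul, conjTranspose_mul,
      conjTranspose_conjTranspose, hD.1.eq, Matrix.mul_assoc]
  · have key : star x ⬝ᵥ (Cᴴ * D * C) *ᵥ x = star (C *ᵥ x) ⬝ᵥ D *ᵥ (C *ᵥ x) := by
      rw [star_mulVec, ← Matrix.mulVec_mulVec, ← Matrix.mulVec_mulVec,
        dotProduct_mulVec (star x)]
    rw [key]
    refine hD.dotProduct_mulVec_pos fun h => hx ?_
    have h2 := congrArg (fun y => C⁻¹ *ᵥ y) h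
    simpa [Matrix.mulVec_mulVec, Matrix.nonsing_inv_mul _ hC] using h2

end Aux

set_option maxHeartbeats 1000000 in
theorem hss_spectral_radius_lt_one (n : ℕ) (A : Matrix (Fin n) (Fin n) ℂ) (α : ℝ)
    (hα : 0 < α)
    (hH : ((1/2 : ℂ) • (A + Aᴴ)).PosDef) :
    spectralRadius ℂ
      (((α : ℂ) • (1 : Matrix (Fin n) (Fin n) ℂ) + (1/2 : ℂ) • (A - Aᴴ))⁻¹ *
       ((α : ℂ) • (1 : Matrix (Fin n) (Fin n) ℂ) - (1/2 : ℂ) • (A + Aᴴ)) *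
       ((α : ℂ) • (1 : Matrix (Fin n) (Fin n) ℂ) + (1/2 : ℂ) • (A + Aᴴ))⁻¹ *
       ((α : ℂ) • (1 : Matrix (Fin n) (Fin n) ℂ) - (1/2 : ℂ) • (A - Aᴴ))) < 1 := by
  rcases Nat.eq_zero_or_pos n with hn | hn
  · subst hn
    have hemp : ∀ M : Matrix (Fin 0) (Fin 0) ℂ, spectrum ℂ M = ∅ := by
      intro M
      ext k
      simp [spectrum.mem_iff, isUnit_of_subsingleton]
    simp [spectralRadius, hemp]
  haveI : Nonempty (Fin n) := ⟨⟨0, hn⟩⟩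
  set H : Matrix (Fin n) (Fin n) ℂ := (1/2 : ℂ) • (A + Aᴴ) with hHdef
  set S : Matrix (Fin n) (Fin n) ℂ := (1/2 : ℂ) • (A - Aᴴ) with hSdef
  set a : Matrix (Fin n) (Fin n) ℂ := (α : ℂ) • (1 : Matrix (Fin n) (Fin n) ℂ) with hadef
  -- basic adjoint facts
  have haH : aᴴ = a := by
    rw [hadef, conjTranspose_smul, conjTranspose_one, Complex.star_def, Complex.conj_ofReal]
  have hSk : Sᴴ = -S := by
    rw [hSdef, conjTranspose_smul, conjTranspose_sub, conjTranspose_conjTranspose]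
    rw [Complex.star_def]
    rw [show ((1:ℂ)/2) = ((1/2 : ℝ) : ℂ) by push_cast; ring, Complex.conj_ofReal]
    rw [← smul_neg, neg_sub]
  -- commutation and product identities
  have hmulS : (a - S) * (a + S) = ((α * α : ℝ) : ℂ) • 1 + Sᴴ * S := by
    rw [hSk, hadef]
    push_cast
    simp only [Matrix.add_mul, Matrix.mul_add, Matrix.sub_mul, Matrix.mul_sub,
      smul_mul_assoc, mul_smul_comm, one_mul, mul_one, smul_smul, Matrix.neg_mul]
    module
  have hmulS' : (a + S) * (a - S) = ((α * α : ℝ) : ℂ) • 1 + Sᴴ * S := by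
    rw [hSk, hadef]
    push_cast
    simp only [Matrix.add_mul, Matrix.mul_add, Matrix.sub_mul, Matrix.mul_sub,
      smul_mul_assoc, mul_smul_comm, one_mul, mul_one, smul_smul, Matrix.neg_mul]
    module
  -- positive definiteness facts
  have hPD1 : (((α * α : ℝ) : ℂ) • (1 : Matrix (Fin n) (Fin n) ℂ) + Sᴴ * S).PosDef :=
    (hss_posDef_smul_real (mul_pos hα hα) Matrix.PosDef.one).add_posSemidef
      (posSemidef_conjTranspose_mul_self S)
  have hdetQ : IsUnit (a + S).det := by
    have h1 : (0 : ℂ) < ((a + S)ᴴ * (a + S)).det := by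
      have : (a + S)ᴴ = a - S := by rw [conjTranspose_add, haH, hSk, sub_eq_add_neg]
      rw [this, hmulS]
      exact hPD1.det_pos
    rw [Matrix.det_mul, Matrix.det_conjTranspose] at h1
    refine isUnit_iff_ne_zero.2 fun h => ?_
    rw [h, mul_zero] at h1
    exact lt_irrefl _ h1
  have hdetQ' : IsUnit (a - S).det := by
    have h1 : (0 : ℂ) < ((a - S)ᴴ * (a - S)).det := by
      have : (a - S)ᴴ = a + S := by
        rw [conjTranspose_sub, haH, hSk, sub_neg_eq_add]
      rw [this, hmulS']
      exact hPD1.det_pos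
    rw [Matrix.det_mul, Matrix.det_conjTranspose] at h1
    refine isUnit_iff_ne_zero.2 fun h => ?_
    rw [h, mul_zero] at h1
    exact lt_irrefl _ h1
  have hPDaH : (a + H).PosDef := (hss_posDef_smul_real hα Matrix.PosDef.one).add hH
  have hdetP : IsUnit (a + H).det := (Matrix.isUnit_iff_isUnit_det _).1 hPDaH.isUnit
  -- similarity transformation
  set T : Matrix (Fin n) (Fin n) ℂ := (a - H) * (a + H)⁻¹ with hTdef
  set U : Matrix (Fin n) (Fin n) ℂ := (a - S) * (a + S)⁻¹ with hUdef
  have hQunit : IsUnit (a + S) := (Matrix.isUnit_iff_isUnit_det _).2 hdetQ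
  have hcoe : (↑hQunit.unit⁻¹ : Matrix (Fin n) (Fin n) ℂ) = (a + S)⁻¹ := by
    rw [Matrix.coe_units_inv, hQunit.unit_spec]
  have hMeq : (a + S)⁻¹ * (a - H) * (a + H)⁻¹ * (a - S) =
      (↑hQunit.unit⁻¹ : Matrix (Fin n) (Fin n) ℂ) * (T * U) *
        (↑hQunit.unit : Matrix (Fin n) (Fin n) ℂ) := by
    rw [hcoe, hQunit.unit_spec, hTdef, hUdef]
    simp only [Matrix.mul_assoc]
    rw [Matrix.nonsing_inv_mul _ hdetQ, Matrix.mul_one]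
  have hconj : spectralRadius ℂ ((a + S)⁻¹ * (a - H) * (a + H)⁻¹ * (a - S)) =
      spectralRadius ℂ (T * U) := by
    rw [hMeq]
    unfold spectralRadius
    rw [spectrum.units_conjugate']
  rw [hconj]
  -- instances
  haveI : Nontrivial (Matrix (Fin n) (Fin n) ℂ) := inferInstance
  haveI : NormOneClass (Matrix (Fin n) (Fin n) ℂ) := ⟨CStarRing.norm_one⟩
  -- U is unitary
  have hU1 : Uᴴ = (a - S)⁻¹ * (a + S) := by
    rw [hUdef, conjTranspose_mul, Matrix.conjTranspose_nonsing_inv, conjTranspose_add,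
      conjTranspose_sub, haH, hSk, sub_neg_eq_add, ← sub_eq_add_neg]
  have hUU : Uᴴ * U = 1 := by
    rw [hU1, hUdef]
    calc (a - S)⁻¹ * (a + S) * ((a - S) * (a + S)⁻¹)
        = (a - S)⁻¹ * ((a + S) * (a - S)) * (a + S)⁻¹ := by
          simp only [Matrix.mul_assoc]
      _ = (a - S)⁻¹ * ((a - S) * (a + S)) * (a + S)⁻¹ := by rw [hmulS', hmulS]
      _ = (a - S)⁻¹ * (a - S) * ((a + S) * (a + S)⁻¹) := by
          simp only [Matrix.mul_assoc]
      _ = 1 := by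
          rw [Matrix.nonsing_inv_mul _ hdetQ', Matrix.mul_nonsing_inv _ hdetQ, one_mul]
  have hUmem : U ∈ unitary (Matrix (Fin n) (Fin n) ℂ) := by
    rw [Unitary.mem_iff]
    refine ⟨by rw [Matrix.star_eq_conjTranspose]; exact hUU,
      by rw [Matrix.star_eq_conjTranspose]; exact mul_eq_one_comm.mp hUU⟩
  have hUnorm : ‖U‖₊ = 1 := by
    have h := CStarRing.norm_coe_unitary (⟨U, hUmem⟩ : unitary (Matrix (Fin n) (Fin n) ℂ))
    exact NNReal.eq (by simpa using h)
  -- analysis of T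
  have hTH : Tᴴ = (a + H)⁻¹ * (a - H) := by
    rw [hTdef, conjTranspose_mul, Matrix.conjTranspose_nonsing_inv, conjTranspose_add,
      conjTranspose_sub, haH, hH.1.eq]
  set b : Matrix (Fin n) (Fin n) ℂ := Tᴴ * T with hbdef
  have hbps : b.PosSemidef := posSemidef_conjTranspose_mul_self T
  have hkey : (a + H) * (1 - b) * (a + H) = ((4 * α : ℝ) : ℂ) • H := by
    have h1 : (a + H) * ((a + H)⁻¹ * (a - H) * ((a - H) * (a + H)⁻¹)) * (a + H)
        = (a - H) * (a - H) := by
      calc (a + H) * ((a + H)⁻¹ * (a - H) * ((a - H) * (a + H)⁻¹)) * (a + H)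
          = (a + H) * (a + H)⁻¹ * ((a - H) * (a - H)) * ((a + H)⁻¹ * (a + H)) := by
            simp only [Matrix.mul_assoc]
        _ = (a - H) * (a - H) := by
            rw [Matrix.mul_nonsing_inv _ hdetP, Matrix.nonsing_inv_mul _ hdetP, one_mul,
              Matrix.mul_one]
    rw [hbdef, hTH, hTdef, Matrix.mul_sub, Matrix.sub_mul, Matrix.mul_one, h1]
    rw [hadef]
    push_cast
    simp only [Matrix.add_mul, Matrix.mul_add, Matrix.sub_mul, Matrix.mul_sub,
      smul_mul_assoc, mul_smul_comm, one_mul, mul_one, smul_smul]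
    module
  have hCdet : IsUnit ((a + H)⁻¹).det := (Matrix.isUnit_iff_isUnit_det _).1 hPDaH.inv.isUnit
  have hCH : ((a + H)⁻¹)ᴴ = (a + H)⁻¹ := hPDaH.inv.1
  have h1b : (1 - b).PosDef := by
    have heq : 1 - b = ((a + H)⁻¹)ᴴ * (((4 * α : ℝ) : ℂ) • H) * (a + H)⁻¹ := by
      rw [hCH, ← hkey]
      calc 1 - b = (a + H)⁻¹ * (a + H) * (1 - b) * ((a + H) * (a + H)⁻¹) := by
            rw [Matrix.nonsing_inv_mul _ hdetP, Matrix.mul_nonsing_inv _ hdetP, one_mul,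
              Matrix.mul_one]
        _ = (a + H)⁻¹ * ((a + H) * (1 - b) * (a + H)) * (a + H)⁻¹ := by
            simp only [Matrix.mul_assoc]
    rw [heq]
    exact hss_posDef_conj (hss_posDef_smul_real (by positivity) hH) hCdet
  have hradb : spectralRadius ℂ b = (‖b‖₊ : ℝ≥0∞) := by
    letI : CStarAlgebra (Matrix (Fin n) (Fin n) ℂ) := inferInstance
    exact IsSelfAdjoint.spectralRadius_eq_nnnorm (IsSelfAdjoint.star_mul_self T)
  -- all spectrum points of b have norm < 1
  have hspecsmall : ∀ k ∈ spectrum ℂ b, ‖k‖ < 1 := by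
    intro k hk
    rw [spectrum.mem_iff] at hk
    have hdet : (k • (1 : Matrix (Fin n) (Fin n) ℂ) - b).det = 0 := by
      by_contra hne
      exact hk (by
        rw [Algebra.algebraMap_eq_smul_one]
        exact (Matrix.isUnit_iff_isUnit_det _).2 (isUnit_iff_ne_zero.2 hne))
    obtain ⟨v, hv, hveq⟩ := Matrix.exists_mulVec_eq_zero_iff.2 hdet
    have hbv : b *ᵥ v = k • v := by
      rw [Matrix.sub_mulVec, smul_mulVec, one_mulVec, sub_eq_zero] at hveq
      exact hveq.symm
    set s : ℂ := star v ⬝ᵥ v with hs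
    have hspos : 0 < s := by
      have h4 := (Matrix.PosDef.one (n := Fin n) (R := ℂ)).dotProduct_mulVec_pos hv
      rwa [one_mulVec] at h4
    have hks : 0 ≤ k * s := by
      have h4 := hbps.dotProduct_mulVec_nonneg v
      rwa [hbv, dotProduct_smul, smul_eq_mul] at h4
    have hlt : k * s < s := by
      have h4 := h1b.dotProduct_mulVec_pos hv
      rw [Matrix.sub_mulVec, one_mulVec, hbv, dotProduct_sub, dotProduct_smul,
        smul_eq_mul] at h4
      exact sub_pos.1 h4
    rw [Complex.lt_def] at hspos hlt
    rw [Complex.le_def] at hks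
    simp only [Complex.zero_re, Complex.zero_im] at hspos hks
    have hsim : s.im = 0 := hspos.2.symm
    have hsre : 0 < s.re := hspos.1
    have him : k.im = 0 := by
      have h4 : (k * s).im = 0 := hks.2.symm
      rw [Complex.mul_im, hsim, mul_zero, zero_add] at h4
      exact (mul_eq_zero.1 h4).resolve_right (ne_of_gt hsre)
    have hre0 : 0 ≤ k.re := by
      have h4 : 0 ≤ (k * s).re := hks.1
      rw [Complex.mul_re, hsim, mul_zero, sub_zero] at h4
      nlinarith [h4, hsre]
    have hre1 : k.re < 1 := by
      have h4 : (k * s).re < s.re := hlt.1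
      rw [Complex.mul_re, hsim, mul_zero, sub_zero] at h4
      exact (mul_lt_iff_lt_one_left hsre).1 h4
    have hkre : k = ((k.re : ℝ) : ℂ) := Complex.ext rfl (by simp [him])
    rw [hkre, Complex.norm_real, Real.norm_eq_abs, abs_of_nonneg hre0]
    exact hre1
  -- the norm of b is attained on the spectrum
  have hne : (spectrum ℂ b).Nonempty := spectrum.nonempty b
  obtain ⟨k0, hk0, hmax⟩ := (spectrum.isCompact b).exists_isMaxOn hne
    (continuous_norm.continuousOn)
  have hbnorm : (‖b‖₊ : ℝ≥0∞) ≤ (‖k0‖₊ : ℝ≥0∞) := by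
    rw [← hradb]
    refine iSup₂_le fun z hz => ?_
    exact ENNReal.coe_le_coe.2 (by exact_mod_cast hmax hz)
  have hbS : ‖b‖₊ < 1 := by
    have h5 : ‖k0‖₊ < 1 := by
      rw [← NNReal.coe_lt_coe, coe_nnnorm, NNReal.coe_one]
      exact hspecsmall k0 hk0
    exact lt_of_le_of_lt (ENNReal.coe_le_coe.1 hbnorm) h5
  have hTnorm : ‖T‖₊ < 1 := by
    by_contra hge
    push_neg at hge
    have h6 : (1 : ℝ≥0) ≤ ‖T‖₊ * ‖T‖₊ := one_le_mul hge hge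
    rw [← CStarRing.nnnorm_star_mul_self (x := T)] at h6
    rw [Matrix.star_eq_conjTranspose] at h6
    exact absurd hbS (not_lt.2 h6)
  calc spectralRadius ℂ (T * U) ≤ (‖T * U‖₊ : ℝ≥0∞) :=
        spectrum.spectralRadius_le_nnnorm (𝕜 := ℂ) (T * U)
    _ ≤ ((‖T‖₊ * ‖U‖₊ : ℝ≥0) : ℝ≥0∞) := ENNReal.coe_le_coe.2 (nnnorm_mul_le _ _)
    _ < 1 := by
        rw [hUnorm, mul_one]
        exact_mod_cast hTnorm
end

section
/- Let A be an invertible n×n real matrix with ‖A^{-1}‖₂ < 1 (spectral norm). Then the absolute value equation Ax - |x| = b has a unique solution for every b ∈ ℝⁿ. -/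
open Matrix
open scoped Matrix.Norms.L2Operator

theorem ave_unique_solution (n : ℕ) (A : Matrix (Fin n) (Fin n) ℝ)
    (hA : IsUnit A) (hnorm : ‖A⁻¹‖ < 1) :
    ∀ b : Fin n → ℝ, ∃! x : Fin n → ℝ, A *ᵥ x - (fun i => |x i|) = b := by
  intro b
  have hdet : IsUnit A.det := (Matrix.isUnit_iff_isUnit_det A).mp hA
  have hinv : A⁻¹ * A = 1 := Matrix.nonsing_inv_mul A hdet
  have hinv' : A * A⁻¹ = 1 := Matrix.mul_nonsing_inv A hdet
  -- the fixed-point map on EuclideanSpace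
  set f : EuclideanSpace ℝ (Fin n) → EuclideanSpace ℝ (Fin n) :=
    fun x => WithLp.toLp 2 (A⁻¹ *ᵥ ((fun i => |x i|) + b)) with hf
  have key : ∀ x : Fin n → ℝ, (A *ᵥ x - (fun i => |x i|) = b) ↔ f (WithLp.toLp 2 x) = WithLp.toLp 2 x := by
    intro x
    constructor
    · intro h
      have habx : (fun i => |x i|) + b = A *ᵥ x := by
        rw [← h, add_sub_cancel]
      refine congrArg (WithLp.toLp 2) ?_
      show A⁻¹ *ᵥ ((fun i => |x i|) + b) = x
      rw [habx, Matrix.mulVec_mulVec, hinv, Matrix.one_mulVec]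
    · intro h
      have h' : A⁻¹ *ᵥ ((fun i => |x i|) + b) = x := congrArg WithLp.ofLp h
      have h2 : A *ᵥ (A⁻¹ *ᵥ ((fun i => |x i|) + b)) = A *ᵥ x := by rw [h']
      rw [Matrix.mulVec_mulVec, hinv', Matrix.one_mulVec] at h2
      funext i
      have := congrFun h2 i
      simp [Pi.add_apply] at this ⊢
      linarith
  -- contraction
  have habs : ∀ x y : EuclideanSpace ℝ (Fin n),
      ‖(WithLp.equiv 2 (Fin n → ℝ)).symm (fun i => |x i| - |y i|)‖ ≤ ‖x - y‖ := by
    intro x y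
    rw [EuclideanSpace.norm_eq, EuclideanSpace.norm_eq]
    apply Real.sqrt_le_sqrt
    apply Finset.sum_le_sum
    intro i _
    have h1 : |(|x i| - |y i|)| ≤ |x i - y i| := abs_abs_sub_abs_le_abs_sub _ _
    have h2 : (x - y) i = x i - y i := rfl
    show ‖|x i| - |y i|‖ ^ 2 ≤ ‖(x - y) i‖ ^ 2
    rw [h2, Real.norm_eq_abs, Real.norm_eq_abs]
    nlinarith [abs_nonneg (x i - y i), abs_nonneg (|x i| - |y i|)]
  have hK : (0 : ℝ) ≤ ‖A⁻¹‖ := norm_nonneg _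
  have hlip : LipschitzWith ⟨‖A⁻¹‖, hK⟩ f := by
    apply LipschitzWith.of_dist_le_mul
    intro x y
    rw [dist_eq_norm, dist_eq_norm]
    set v : EuclideanSpace ℝ (Fin n) :=
      (WithLp.equiv 2 (Fin n → ℝ)).symm (fun i => |x i| - |y i|) with hv
    have h1 : f x - f y = (EuclideanSpace.equiv (Fin n) ℝ).symm (A⁻¹ *ᵥ v) := by
      show WithLp.toLp 2 (A⁻¹ *ᵥ _) - WithLp.toLp 2 (A⁻¹ *ᵥ _) = WithLp.toLp 2 _
      rw [← WithLp.toLp_sub, ← Matrix.mulVec_sub]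
      exact congrArg (fun w => WithLp.toLp 2 (A⁻¹ *ᵥ w)) (by
        funext i
        simp [hv, WithLp.equiv_symm_apply, Pi.add_apply, Pi.sub_apply])
    rw [h1]
    calc ‖(EuclideanSpace.equiv (Fin n) ℝ).symm (A⁻¹ *ᵥ v)‖
        ≤ ‖A⁻¹‖ * ‖v‖ := Matrix.l2_opNorm_mulVec _ _
      _ ≤ ‖A⁻¹‖ * ‖x - y‖ := mul_le_mul_of_nonneg_left (habs x y) hK
  have hcon : ContractingWith ⟨‖A⁻¹‖, hK⟩ f := ⟨by exact_mod_cast hnorm, hlip⟩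
  refine ⟨(ContractingWith.fixedPoint f hcon : EuclideanSpace ℝ (Fin n)).ofLp, ?_, ?_⟩
  · exact (key _).mpr (hcon.fixedPoint_isFixedPt)
  · intro y hy
    rw [← hcon.fixedPoint_unique ((key y).mp hy)]
end

section
/- Let A be an invertible n×n real matrix whose smallest singular value exceeds 1. Then the Picard iteration x^{(k+1)} = A^{-1}(|x^{(k)}| + b) converges to the unique solution of Ax - |x| = b for any initial vector x^{(0)} ∈ ℝⁿ. -/
open Matrix Filter

theorem picard_iteration_converges (n : ℕ) (A : Matrix (Fin n) (Fin n) ℝ)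
    (hA : IsUnit A) (b : Fin n → ℝ)
    (hσ : ∃ c : ℝ, 1 < c ∧ ∀ x : Fin n → ℝ,
      c * ‖(WithLp.equiv 2 (Fin n → ℝ)).symm x‖ ≤
        ‖(WithLp.equiv 2 (Fin n → ℝ)).symm (A *ᵥ x)‖) :
    ∃ xs : Fin n → ℝ,
      (A *ᵥ xs - (fun i => |xs i|) = b) ∧
      (∀ y : Fin n → ℝ, A *ᵥ y - (fun i => |y i|) = b → y = xs) ∧
      ∀ x₀ : Fin n → ℝ,
        Tendsto (fun k => (fun x : Fin n → ℝ => A⁻¹ *ᵥ ((fun i => |x i|) + b))^[k] x₀)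
          atTop (nhds xs) := by
  obtain ⟨c, hc1, hc⟩ := hσ
  have hcpos : 0 < c := lt_trans one_pos hc1
  have hdet : IsUnit A.det := (Matrix.isUnit_iff_isUnit_det A).mp hA
  have hAinv : ∀ v : Fin n → ℝ, A⁻¹ *ᵥ (A *ᵥ v) = v := fun v => by
    rw [Matrix.mulVec_mulVec, Matrix.nonsing_inv_mul A hdet, Matrix.one_mulVec]
  have hAinv' : ∀ v : Fin n → ℝ, A *ᵥ (A⁻¹ *ᵥ v) = v := fun v => by
    rw [Matrix.mulVec_mulVec, Matrix.mul_nonsing_inv A hdet, Matrix.one_mulVec]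
  set e := WithLp.equiv 2 (Fin n → ℝ) with he
  set f : (Fin n → ℝ) → (Fin n → ℝ) := fun x => A⁻¹ *ᵥ ((fun i => |x i|) + b) with hf
  set g : EuclideanSpace ℝ (Fin n) → EuclideanSpace ℝ (Fin n) :=
    fun x => e.symm (f (e x)) with hg
  have hinvb : ∀ w : Fin n → ℝ, ‖e.symm (A⁻¹ *ᵥ w)‖ ≤ c⁻¹ * ‖e.symm w‖ := by
    intro w
    have h := hc (A⁻¹ *ᵥ w)
    rw [hAinv'] at h
    rw [inv_mul_eq_div, le_div_iff₀ hcpos, mul_comm]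
    exact h
  have habs : ∀ x y : Fin n → ℝ,
      ‖e.symm ((fun i => |x i|) - fun i => |y i|)‖ ≤ ‖e.symm (x - y)‖ := by
    intro x y
    rw [EuclideanSpace.norm_eq, EuclideanSpace.norm_eq]
    apply Real.sqrt_le_sqrt
    apply Finset.sum_le_sum
    intro i _
    have h1 : ‖(e.symm ((fun i => |x i|) - fun i => |y i|)) i‖ = |(|x i| - |y i|)| := by
      simp [he, Real.norm_eq_abs]
    have h2 : ‖(e.symm (x - y)) i‖ = |x i - y i| := by
      simp [he, Real.norm_eq_abs]
    rw [h1, h2]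
    exact pow_le_pow_left₀ (abs_nonneg _) (abs_abs_sub_abs_le_abs_sub _ _) 2
  set K : NNReal := ⟨c⁻¹, by positivity⟩ with hK
  have hKlt : K < 1 := by
    rw [← NNReal.coe_lt_coe]
    show c⁻¹ < 1
    exact inv_lt_one_of_one_lt₀ hc1
  have hlip : LipschitzWith K g := by
    apply LipschitzWith.of_dist_le_mul
    intro x y
    rw [dist_eq_norm, dist_eq_norm]
    have key : g x - g y = e.symm (A⁻¹ *ᵥ ((fun i => |e x i|) - fun i => |e y i|)) := by
      simp only [hg, hf]
      rw [← (show ∀ u v : Fin n → ℝ, e.symm (u - v) = e.symm u - e.symm v from fun u v => rfl), ← Matrix.mulVec_sub, add_sub_add_right_eq_sub]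
    rw [key]
    have hKc : (K : ℝ) = c⁻¹ := rfl
    rw [hKc]
    calc ‖e.symm (A⁻¹ *ᵥ ((fun i => |e x i|) - fun i => |e y i|))‖
        ≤ c⁻¹ * ‖e.symm ((fun i => |e x i|) - fun i => |e y i|)‖ := hinvb _
      _ ≤ c⁻¹ * ‖e.symm (e x - e y)‖ :=
          mul_le_mul_of_nonneg_left (habs _ _) (by positivity)
      _ = c⁻¹ * ‖x - y‖ := by rw [(show ∀ u v : Fin n → ℝ, e.symm (u - v) = e.symm u - e.symm v from fun u v => rfl)]; simp
  have hcontr : ContractingWith K g := ⟨hKlt, hlip⟩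
  have : Nonempty (EuclideanSpace ℝ (Fin n)) := ⟨0⟩
  set p := hcontr.fixedPoint g with hp
  have hfix : g p = p := hcontr.fixedPoint_isFixedPt
  set xs : Fin n → ℝ := e p with hxs
  have hfixf : f xs = xs := by
    have := hfix
    simp only [hg] at this
    have := congrArg e this
    simpa [hxs] using this
  have heq : ∀ z : Fin n → ℝ, (f z = z ↔ A *ᵥ z - (fun i => |z i|) = b) := by
    intro z
    constructor
    · intro h
      have := congrArg (fun v => A *ᵥ v) h
      simp only [hf, hAinv'] at this
      rw [← this]
      ext i
      simp
    · intro h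
      have : A *ᵥ z = (fun i => |z i|) + b := by
        rw [← h]; ext i; simp
      simp only [hf, ← this, hAinv]
  refine ⟨xs, (heq xs).mp hfixf, ?_, ?_⟩
  · intro y hy
    have hyfix : f y = y := (heq y).mpr hy
    have : g (e.symm y) = e.symm y := by
      simp [hg, hyfix]
    have := hcontr.fixedPoint_unique (f := g) this
    calc y = e (e.symm y) := by simp
      _ = e p := by rw [this]
      _ = xs := rfl
  · intro x₀
    have hiter : ∀ k, g^[k] (e.symm x₀) = e.symm (f^[k] x₀) := by
      intro k
      induction k with
      | zero => simp
      | succ k ih =>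
        rw [Function.iterate_succ_apply', Function.iterate_succ_apply', ih]
        simp [hg]
    have ht := hcontr.tendsto_iterate_fixedPoint (e.symm x₀)
    have hcont : Continuous (fun z : EuclideanSpace ℝ (Fin n) => e z) :=
      (PiLp.continuousLinearEquiv 2 ℝ (fun _ : Fin n => ℝ)).continuous
    have := (hcont.tendsto p).comp ht
    simpa [Function.comp_def, hiter, hxs] using this
end

section
/- If x* satisfies Ax* - |x*| = b, then x* is a fixed point of one full step of the nonlinear HSS-like iteration: with U(x) = (αI + H)^{-1}((αI - S)x + |x| + b) and V(x) = (αI + S)^{-1}((αI - H)x + |x| + b), one has V(U(x*)) = x*. -/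
open Matrix

private lemma aux_isUnit_det {n : ℕ} (M : Matrix (Fin n) (Fin n) ℝ)
    (h : ∀ x : Fin n → ℝ, x ≠ 0 → 0 < x ⬝ᵥ (M *ᵥ x)) : IsUnit M.det := by
  rw [← Matrix.isUnit_iff_isUnit_det, ← Matrix.mulVec_injective_iff_isUnit]
  intro x y hxy
  by_contra hne
  have h0 : M *ᵥ (x - y) = 0 := by
    rw [Matrix.mulVec_sub, hxy, sub_self]
  have := h (x - y) (sub_ne_zero.mpr hne)
  rw [h0] at this
  simp at this

private lemma aux_cancel {n : ℕ} (M : Matrix (Fin n) (Fin n) ℝ)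
    (h : IsUnit M.det) (x : Fin n → ℝ) : M⁻¹ *ᵥ (M *ᵥ x) = x := by
  rw [Matrix.mulVec_mulVec, Matrix.nonsing_inv_mul M h, Matrix.one_mulVec]

theorem ave_solution_is_hss_like_fixed_point (n : ℕ) (A : Matrix (Fin n) (Fin n) ℝ)
    (b : Fin n → ℝ) (α : ℝ) (hα : 0 < α)
    (hH : ((1/2 : ℝ) • (A + Aᵀ)).PosDef)
    (xs : Fin n → ℝ) (hx : A *ᵥ xs - (fun i => |xs i|) = b) :
    (fun x : Fin n → ℝ =>
        (α • (1 : Matrix (Fin n) (Fin n) ℝ) + (1/2 : ℝ) • (A - Aᵀ))⁻¹ *ᵥ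
          ((α • (1 : Matrix (Fin n) (Fin n) ℝ) - (1/2 : ℝ) • (A + Aᵀ)) *ᵥ x +
            (fun i => |x i|) + b))
      ((fun x : Fin n → ℝ =>
        (α • (1 : Matrix (Fin n) (Fin n) ℝ) + (1/2 : ℝ) • (A + Aᵀ))⁻¹ *ᵥ
          ((α • (1 : Matrix (Fin n) (Fin n) ℝ) - (1/2 : ℝ) • (A - Aᵀ)) *ᵥ x +
            (fun i => |x i|) + b)) xs) = xs := by
  set H : Matrix (Fin n) (Fin n) ℝ := (1/2 : ℝ) • (A + Aᵀ) with hHdef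
  set S : Matrix (Fin n) (Fin n) ℝ := (1/2 : ℝ) • (A - Aᵀ) with hSdef
  have hb : (fun i => |xs i|) + b = A *ᵥ xs := by
    rw [← hx]; abel
  -- quadratic form positivity for α•1 + H
  have hposH : ∀ x : Fin n → ℝ, x ≠ 0 →
      0 < x ⬝ᵥ ((α • (1 : Matrix (Fin n) (Fin n) ℝ) + H) *ᵥ x) := by
    intro x hx0
    have h1 : 0 < x ⬝ᵥ (H *ᵥ x) := by
      have := hH.dotProduct_mulVec_pos hx0
      simpa using this
    have h2 : 0 < x ⬝ᵥ x := by
      have hne := (dotProduct_self_eq_zero (v := x)).not.mpr hx0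
      have hnn : 0 ≤ x ⬝ᵥ x := Finset.sum_nonneg fun i _ => mul_self_nonneg _
      exact hnn.lt_of_ne (Ne.symm hne)
    have : x ⬝ᵥ ((α • (1 : Matrix (Fin n) (Fin n) ℝ) + H) *ᵥ x)
        = α * (x ⬝ᵥ x) + x ⬝ᵥ (H *ᵥ x) := by
      rw [Matrix.add_mulVec, dotProduct_add, Matrix.smul_mulVec,
        Matrix.one_mulVec, dotProduct_smul, smul_eq_mul]
    rw [this]
    positivity
  -- quadratic form positivity for α•1 + S (skew part contributes 0)
  have hskew : ∀ x : Fin n → ℝ, x ⬝ᵥ (S *ᵥ x) = 0 := by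
    intro x
    have hT : Sᵀ = -S := by
      rw [hSdef, Matrix.transpose_smul, Matrix.transpose_sub, Matrix.transpose_transpose,
        ← smul_neg, neg_sub]
    have h1 : x ⬝ᵥ (S *ᵥ x) = (Sᵀ *ᵥ x) ⬝ᵥ x := by
      rw [Matrix.dotProduct_mulVec, ← Matrix.mulVec_transpose]
    rw [hT] at h1
    have h2 : ((-S) *ᵥ x) ⬝ᵥ x = -(x ⬝ᵥ (S *ᵥ x)) := by
      rw [Matrix.neg_mulVec, neg_dotProduct, dotProduct_comm]
    rw [h2] at h1
    linarith
  have hposS : ∀ x : Fin n → ℝ, x ≠ 0 →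
      0 < x ⬝ᵥ ((α • (1 : Matrix (Fin n) (Fin n) ℝ) + S) *ᵥ x) := by
    intro x hx0
    have h2 : 0 < x ⬝ᵥ x := by
      have hne := (dotProduct_self_eq_zero (v := x)).not.mpr hx0
      have hnn : 0 ≤ x ⬝ᵥ x := Finset.sum_nonneg fun i _ => mul_self_nonneg _
      exact hnn.lt_of_ne (Ne.symm hne)
    have : x ⬝ᵥ ((α • (1 : Matrix (Fin n) (Fin n) ℝ) + S) *ᵥ x)
        = α * (x ⬝ᵥ x) + x ⬝ᵥ (S *ᵥ x) := by
      rw [Matrix.add_mulVec, dotProduct_add, Matrix.smul_mulVec,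
        Matrix.one_mulVec, dotProduct_smul, smul_eq_mul]
    rw [this, hskew]
    positivity
  have hUH : IsUnit (α • (1 : Matrix (Fin n) (Fin n) ℝ) + H).det :=
    aux_isUnit_det _ hposH
  have hUS : IsUnit (α • (1 : Matrix (Fin n) (Fin n) ℝ) + S).det :=
    aux_isUnit_det _ hposS
  -- inner expression equals (α•1+H) *ᵥ xs
  have key1 : (α • (1 : Matrix (Fin n) (Fin n) ℝ) - S) *ᵥ xs + (fun i => |xs i|) + b
      = (α • (1 : Matrix (Fin n) (Fin n) ℝ) + H) *ᵥ xs := by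
    have hM : (α • (1 : Matrix (Fin n) (Fin n) ℝ) - S) + A
        = α • (1 : Matrix (Fin n) (Fin n) ℝ) + H := by
      rw [hHdef, hSdef]; module
    rw [add_assoc, hb, ← Matrix.add_mulVec, hM]
  have key2 : (α • (1 : Matrix (Fin n) (Fin n) ℝ) - H) *ᵥ xs + (fun i => |xs i|) + b
      = (α • (1 : Matrix (Fin n) (Fin n) ℝ) + S) *ᵥ xs := by
    have hM : (α • (1 : Matrix (Fin n) (Fin n) ℝ) - H) + A
        = α • (1 : Matrix (Fin n) (Fin n) ℝ) + S := by
      rw [hHdef, hSdef]; module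
    rw [add_assoc, hb, ← Matrix.add_mulVec, hM]
  simp only [key1, key2, aux_cancel _ hUH, aux_cancel _ hUS]
end
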